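/- Let n ≥ 2 and consider the type-C_n crystal B_1 = {1 < 2 < … < n < n̄ < … < 2̄ < 1̄} of the vector representation, with crystal operators f̃_i(i)=i+1, f̃_i(i+1 with bar conventions)=ī for 1≤i≤n−1 (f̃_i sends i↦i+1 and (i+1)‾↦ī), and f̃_n(n)=n̄. Let m ≤ n and let b = x_1 ⊗ … ⊗ x_m ∈ B_1^{⊗m} be a highest weight vertex (ε_i(b) = 0 for all 1 ≤ i ≤ n). Then every letter x_j lies in the set {1, 2, …, m, (m−1)‾, (m−2)‾, …, 1̄}. -/
import Mathlib


/-- The letters `1,…,n,n̄,…,1̄` of the type `C_n` (or `D_n`) vector representation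
crystal: `Sum.inl j` is the unbarred letter `j+1`, `Sum.inr j` the barred letter
`(j+1)‾` (0-indexed). -/
abbrev CLetter (n : ℕ) := Fin n ⊕ Fin n

/-- `ε_i` on letters for the type `C_n` crystal `B_1` (colors `i = c+1`, `c : Fin n`):
`ε_i(i+1) = 1`, `ε_i(ī) = 1` for `i ≤ n-1`, `ε_n(n̄) = 1`, all others `0`. -/
def epsL (n : ℕ) (c : Fin n) : CLetter n → ℕ
  | Sum.inl j => if (j : ℕ) = (c : ℕ) + 1 then 1 else 0
  | Sum.inr j => if (j : ℕ) = (c : ℕ) then 1 else 0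

/-- `φ_i` on letters: `φ_i(i) = 1`, `φ_i((i+1)‾) = 1` for `i ≤ n-1`, `φ_n(n) = 1`. -/
def phiL (n : ℕ) (c : Fin n) : CLetter n → ℕ
  | Sum.inl j => if (j : ℕ) = (c : ℕ) then 1 else 0
  | Sum.inr j => if (j : ℕ) = (c : ℕ) + 1 then 1 else 0

/-- `ε_i` of a tensor product of letters (leftmost factor first), by the tensor rule
`ε_i(b ⊗ w) = ε_i(b) + max(0, ε_i(w) - φ_i(b))` (truncated subtraction). -/
def epsW (n : ℕ) (c : Fin n) : List (CLetter n) → ℕ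
  | [] => 0
  | x :: w => epsL n c x + (epsW n c w - phiL n c x)

/-- Position of a letter in the type `C_n` total order `1 < ⋯ < n < n̄ < ⋯ < 1̄`. -/
def toC (n : ℕ) : CLetter n → ℕ
  | Sum.inl j => (j : ℕ)
  | Sum.inr j => 2 * n - 1 - (j : ℕ)

/-- The weight of a letter: `wt(i) = ε_i`, `wt(ī) = -ε_i`. -/
def wtL (n : ℕ) : CLetter n → Fin n → ℤ
  | Sum.inl j => fun x => if x = j then 1 else 0
  | Sum.inr j => fun x => if x = j then -1 else 0

lemma epsW_le_append (n : ℕ) (c : Fin n) (u t : List (CLetter n))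
    (h : ∀ y ∈ u, phiL n c y = 0) : epsW n c t ≤ epsW n c (u ++ t) := by
  induction u with
  | nil => simp
  | cons y u ih =>
    have hy : phiL n c y = 0 := h y (by simp)
    have h2 := ih (fun z hz => h z (by simp [hz]))
    simp only [List.cons_append, epsW, List.append_eq]
    omega

lemma exists_phi_pos (n : ℕ) (c : Fin n) (u v : List (CLetter n)) (x : CLetter n)
    (h0 : epsW n c (u ++ x :: v) = 0) (hx : epsL n c x ≠ 0) :
    ∃ y ∈ u, phiL n c y ≠ 0 := by
  by_contra h
  push_neg at h
  have h1 := epsW_le_append n c u (x :: v) h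
  have h2 : epsL n c x ≤ epsW n c (x :: v) := by
    simp only [epsW]; exact Nat.le_add_right _ _
  omega

lemma key_index (n : ℕ) (w : List (CLetter n)) (hw : ∀ c : Fin n, epsW n c w = 0) :
    ∀ p, ∀ hp : p < w.length,
      (∀ j : Fin n, w[p] = Sum.inl j → (j : ℕ) ≤ p) ∧
      (∀ j : Fin n, w[p] = Sum.inr j → (j : ℕ) + 1 ≤ p) := by
  intro p
  induction p using Nat.strong_induction_on with
  | _ p ih =>
    intro hp
    have hdec : w = w.take p ++ w[p] :: w.drop (p + 1) := by
      conv_lhs => rw [← List.take_append_drop p w]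
      rw [List.drop_eq_getElem_cons hp]
    -- helper to find an earlier φ-positive letter
    have find : ∀ c : Fin n, epsL n c w[p] ≠ 0 →
        ∃ q, ∃ hq : q < p, ∃ hq' : q < w.length, phiL n c w[q] ≠ 0 := by
      intro c hc
      have h0 : epsW n c (w.take p ++ w[p] :: w.drop (p + 1)) = 0 := by
        rw [← hdec]; exact hw c
      obtain ⟨y, hy, hyphi⟩ := exists_phi_pos n c _ _ _ h0 hc
      obtain ⟨q, hq, hqy⟩ := List.mem_iff_getElem.mp hy
      have hql : q < w.length := lt_of_lt_of_le hq (by simp [List.length_take])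
      have hqp : q < p := lt_of_lt_of_le hq (by simp [List.length_take])
      have h3 : w[q] = y := by rw [← hqy, List.getElem_take]
      refine ⟨q, hqp, hql, ?_⟩
      rw [h3]; exact hyphi
    constructor
    · intro j hj
      by_cases h0 : (j : ℕ) = 0
      · omega
      · have hcn : (j : ℕ) - 1 < n := by have := j.isLt; omega
        set c : Fin n := ⟨(j : ℕ) - 1, hcn⟩ with hc
        have hce : epsL n c w[p] ≠ 0 := by
          rw [hj]; simp only [epsL, hc]; simp; omega
        obtain ⟨q, hqp, hql, hphi⟩ := find c hce
        obtain ⟨hL, hR⟩ := ih q hqp hql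
        rcases hget : w[q] with k | k
        · have hk : (k : ℕ) = (j : ℕ) - 1 := by
            rw [hget] at hphi; simpa [phiL, hc] using hphi
          have := hL k hget
          omega
        · have hk : (k : ℕ) = (j : ℕ) := by
            rw [hget] at hphi
            simp only [phiL, hc] at hphi
            split at hphi
            · omega
            · simp at hphi
          have := hR k hget
          omega
    · intro j hj
      have hce : epsL n j w[p] ≠ 0 := by
        rw [hj]; simp [epsL]
      obtain ⟨q, hqp, hql, hphi⟩ := find j hce
      obtain ⟨hL, hR⟩ := ih q hqp hql
      rcases hget : w[q] with k | k
      · have hk : (k : ℕ) = (j : ℕ) := by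
          rw [hget] at hphi; simpa [phiL] using hphi
        have := hL k hget
        omega
      · have hk : (k : ℕ) = (j : ℕ) + 1 := by
          rw [hget] at hphi; simpa [phiL] using hphi
        have := hR k hget
        omega

/-- Lemma 25: every letter of a highest weight vertex of the type `C_n`
crystal `B_1^{⊗m}` (`m ≤ n`) lies in `{1, …, m, (m-1)‾, …, 1̄}`. -/
theorem highest_weight_letters_bounded (n m : ℕ) (hm : m ≤ n)
    (w : List (CLetter n)) (hlen : w.length = m)
    (hw : ∀ c : Fin n, epsW n c w = 0) :
    ∀ x ∈ w, (∀ j : Fin n, x = Sum.inl j → (j : ℕ) < m) ∧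
      (∀ j : Fin n, x = Sum.inr j → (j : ℕ) + 1 < m) := by
  intro x hx
  obtain ⟨p, hp, hpx⟩ := List.mem_iff_getElem.mp hx
  obtain ⟨hL, hR⟩ := key_index n w hw p hp
  have hpm : p < m := hlen ▸ hp
  exact ⟨fun j hj => lt_of_le_of_lt (hL j (hpx ▸ hj)) hpm,
    fun j hj => lt_of_le_of_lt (hR j (hpx ▸ hj)) hpm⟩
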